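/- Let n_k = p_1 p_2 ⋯ p_k be the product of the first k primes, and ρ(n) = |X'_n|/φ(n) the proportion of primitive Dirichlet characters mod n. For every fixed k > 1 and every n ≥ 2n_k with n ≢ 2 (mod 4) and ω(n) = k (ω counting distinct prime divisors), one has ρ(2n_k)·log log(2n_k) ≤ ρ(n)·log log n. -/

import Mathlib

open Filter Finset Real

/-- The number of primitive Dirichlet characters modulo `n`. -/
noncomputable def numPrim (n : ℕ) : ℕ :=
  Nat.card {χ : DirichletCharacter ℂ n // χ.IsPrimitive}

/-- The proportion of Dirichlet characters mod `n` that are primitive. -/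
noncomputable def rho (n : ℕ) : ℝ := (numPrim n : ℝ) / (Nat.totient n : ℝ)

/-- The product of the first `k` primes. -/
noncomputable def nthPrimorial (k : ℕ) : ℕ := ∏ i ∈ Finset.range k, Nat.nth Nat.Prime i

/-- The twin prime constant `C₂ = ∏_{p > 2} p(p-2)/(p-1)²`. -/
noncomputable def twinPrimeConst : ℝ :=
  ∏' p : {p : ℕ // p.Prime ∧ 2 < p},
    (((p : ℕ) : ℝ) * (((p : ℕ) : ℝ) - 2) / (((p : ℕ) : ℝ) - 1) ^ 2)

/-- Chebyshev's theta function `ϑ(x) = ∑_{p ≤ x} log p`. -/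
noncomputable def theta (x : ℝ) : ℝ :=
  ∑ p ∈ Nat.primesBelow (⌊x⌋₊ + 1), Real.log p

/-- The function `f` of Nicolas. -/
noncomputable def ffun (x : ℝ) : ℝ :=
  Real.exp Real.eulerMascheroniConstant * Real.log (theta x) *
    ∏ p ∈ Nat.primesBelow (⌊x⌋₊ + 1), (1 - 1 / (p : ℝ))

/-- The modified function `g`. -/
noncomputable def gfun (x : ℝ) : ℝ :=
  Real.exp Real.eulerMascheroniConstant * Real.log (theta x + Real.log 2) *
    (∏ p ∈ Nat.primesBelow (⌊x⌋₊ + 1), (1 - 1 / (p : ℝ))) *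
    ∏' p : {p : ℕ // p.Prime ∧ x < (p : ℝ)},
      (1 + 1 / (((p : ℕ) : ℝ) * (((p : ℕ) : ℝ) - 2)))


/-! ### Auxiliary results on Dirichlet characters -/

namespace DirichletCharacter

variable {R : Type*} [CommMonoidWithZero R] {n : ℕ}

lemma changeLevel_primitiveCharacter_aux (χ : DirichletCharacter R n) :
    changeLevel (conductor_dvd_level χ) χ.primitiveCharacter = χ :=
  ((factorsThrough_conductor χ).choose_spec.choose_spec).symm

lemma factorsThrough_gcd_aux [NeZero n] {χ : DirichletCharacter R n} {d₁ d₂ : ℕ}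
    (h1 : χ.FactorsThrough d₁) (h2 : χ.FactorsThrough d₂) :
    χ.FactorsThrough (Nat.gcd d₁ d₂) := by
  have hd1 : d₁ ∣ n := h1.dvd
  have hd2 : d₂ ∣ n := h2.dvd
  have hgd : Nat.gcd d₁ d₂ ∣ n := (Nat.gcd_dvd_left d₁ d₂).trans hd1
  rw [factorsThrough_iff_ker_unitsMap hgd]
  rw [factorsThrough_iff_ker_unitsMap hd1] at h1
  rw [factorsThrough_iff_ker_unitsMap hd2] at h2
  intro u hu
  rw [MonoidHom.mem_ker] at hu
  set g := Nat.gcd d₁ d₂ with hg_def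
  set a : ℕ := (u : ZMod n).val with ha_def
  have ha : a.Coprime n := ZMod.val_coe_unit_coprime u
  have hag : ((a : ℕ) : ZMod g) = 1 := by
    have h0 : ((ZMod.unitsMap hgd u : (ZMod g)ˣ) : ZMod g) = 1 := by rw [hu]; rfl
    rw [ZMod.unitsMap_def] at h0
    simp only [Units.coe_map, MonoidHom.coe_coe, ZMod.castHom_apply] at h0
    rw [ha_def, ZMod.natCast_val, h0]
  have hmodeq : (g : ℤ) ∣ (a : ℤ) - 1 := by
    have := (ZMod.natCast_eq_natCast_iff a 1 g).mp (by simpa using hag)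
    have := (Nat.modEq_iff_dvd).mp this.symm
    simpa using this
  obtain ⟨c, hc⟩ := hmodeq
  set t : ℤ := Nat.gcdA d₁ d₂ * c with ht_def
  set s : ℤ := Nat.gcdB d₁ d₂ * c with hs_def
  have hz : (a : ℤ) - 1 = d₁ * t + d₂ * s := by
    rw [ht_def, hs_def, ← mul_assoc, ← mul_assoc, ← add_mul, hc]
    rw [hg_def, Nat.gcd_eq_gcd_ab]
  set z : ℤ := 1 + d₁ * t with hz_def
  have hz2 : z = (a : ℤ) + (d₂ : ℤ) * (-s) := by rw [hz_def]; linarith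
  have hcop1 : IsCoprime z ((d₁ : ℕ) : ℤ) :=
    (isCoprime_one_left (x := ((d₁:ℕ):ℤ))).add_mul_left_left t
  have hcopa : IsCoprime ((a : ℕ) : ℤ) ((d₂ : ℕ) : ℤ) :=
    Nat.isCoprime_iff_coprime.mpr (Nat.Coprime.coprime_dvd_right hd2 ha)
  have hcop2 : IsCoprime z ((d₂ : ℕ) : ℤ) := by rw [hz2]; exact hcopa.add_mul_left_left (-s)
  set l : ℕ := Nat.lcm d₁ d₂ with hl_def
  have hl : l ∣ n := Nat.lcm_dvd hd1 hd2
  have hcopl : IsCoprime z ((l : ℕ) : ℤ) := by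
    refine IsCoprime.of_isCoprime_of_dvd_right (hcop1.mul_right hcop2) ?_
    exact_mod_cast Int.natCast_dvd_natCast.mpr (Nat.lcm_dvd_mul d₁ d₂)
  obtain ⟨x, y, hxy⟩ := hcopl
  have hwunit : IsUnit ((z : ℤ) : ZMod l) := by
    refine IsUnit.of_mul_eq_one ((x : ℤ) : ZMod l) ?_
    have := congrArg (fun w : ℤ => (w : ZMod l)) hxy
    push_cast at this
    rw [ZMod.natCast_self] at this
    rw [mul_comm]
    simpa using this
  obtain ⟨u₁, hu₁⟩ := ZMod.unitsMap_surjective hl hwunit.unit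
  set u₂ : (ZMod n)ˣ := u₁⁻¹ * u with hu₂_def
  have key : ∀ (e : ℕ) (hel : e ∣ l),
      ((ZMod.unitsMap (hel.trans hl) u₁ : (ZMod e)ˣ) : ZMod e) = ((z : ℤ) : ZMod e) := by
    intro e hel
    have hcomp : ZMod.unitsMap (hel.trans hl) u₁ = ZMod.unitsMap hel (ZMod.unitsMap hl u₁) := by
      rw [← ZMod.unitsMap_comp hel hl]; rfl
    rw [hcomp, hu₁, ZMod.unitsMap_def]
    simp only [Units.coe_map, MonoidHom.coe_coe, IsUnit.unit_spec]
    exact map_intCast (ZMod.castHom hel (ZMod e)) z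
  have hA : ZMod.unitsMap hd1 u₁ = 1 := by
    have := key d₁ (Nat.dvd_lcm_left d₁ d₂)
    refine Units.ext ?_
    rw [show hd1 = ((Nat.dvd_lcm_left d₁ d₂).trans hl) from rfl, this]
    rw [hz_def]
    push_cast
    rw [ZMod.natCast_self]
    ring
  have hB : ZMod.unitsMap hd2 u₂ = 1 := by
    have h1' := key d₂ (Nat.dvd_lcm_right d₁ d₂)
    have hu₁d2 : ((ZMod.unitsMap hd2 u₁ : (ZMod d₂)ˣ) : ZMod d₂) = ((a : ℕ) : ZMod d₂) := by
      rw [show hd2 = ((Nat.dvd_lcm_right d₁ d₂).trans hl) from rfl, h1', hz2]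
      push_cast
      rw [ZMod.natCast_self]
      ring
    have hud2 : ((ZMod.unitsMap hd2 u : (ZMod d₂)ˣ) : ZMod d₂) = ((a : ℕ) : ZMod d₂) := by
      rw [ZMod.unitsMap_def]
      simp only [Units.coe_map, MonoidHom.coe_coe, ZMod.castHom_apply]
      rw [ha_def, ZMod.natCast_val]
    have : ZMod.unitsMap hd2 u₁ = ZMod.unitsMap hd2 u := Units.ext (by rw [hu₁d2, hud2])
    rw [hu₂_def, map_mul, map_inv, this, inv_mul_cancel]
  have hmem1 : u₁ ∈ χ.toUnitHom.ker := h1 (MonoidHom.mem_ker.mpr hA)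
  have hmem2 : u₂ ∈ χ.toUnitHom.ker := h2 (MonoidHom.mem_ker.mpr hB)
  have : u = u₁ * u₂ := by rw [hu₂_def]; group
  rw [MonoidHom.mem_ker, this, map_mul, MonoidHom.mem_ker.mp hmem1, MonoidHom.mem_ker.mp hmem2,
    one_mul]

lemma conductor_changeLevel_aux [NeZero n] {d : ℕ} (hd : d ∣ n) (ψ : DirichletCharacter R d) :
    conductor (changeLevel hd ψ) = conductor ψ := by
  refine le_antisymm ?_ ?_
  · refine Nat.sInf_le ?_
    refine ⟨(conductor_dvd_level ψ).trans hd, ψ.primitiveCharacter, ?_⟩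
    conv_lhs => rw [← changeLevel_primitiveCharacter_aux ψ]
    rw [← changeLevel_trans _ (conductor_dvd_level ψ) hd]
  · have hf1 : (changeLevel hd ψ).FactorsThrough (conductor (changeLevel hd ψ)) :=
      factorsThrough_conductor _
    have hf2 : (changeLevel hd ψ).FactorsThrough d := ⟨hd, ψ, rfl⟩
    obtain ⟨hdvd, ψ₀, hψ₀⟩ := factorsThrough_gcd_aux hf1 hf2
    have hgd : Nat.gcd (conductor (changeLevel hd ψ)) d ∣ d := Nat.gcd_dvd_right _ _
    have hψ : ψ = changeLevel hgd ψ₀ := by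
      apply changeLevel_injective hd
      rw [← changeLevel_trans _ hgd hd]
      exact hψ₀
    have : conductor ψ ≤ Nat.gcd (conductor (changeLevel hd ψ)) d :=
      Nat.sInf_le ⟨hgd, ψ₀, hψ⟩
    exact this.trans (Nat.gcd_le_left _ (by
      have := conductor_ne_zero (changeLevel hd ψ)
      omega))

end DirichletCharacter

/-! ### The divisor-sum identity for the number of primitive characters -/

open DirichletCharacter in
lemma totient_eq_sum_numPrim {n : ℕ} (hn : n ≠ 0) :
    n.totient = ∑ d ∈ n.divisors, numPrim d := by
  haveI : NeZero n := ⟨hn⟩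
  haveI : NeZero ((Monoid.exponent (ZMod n)ˣ : ℕ) : ℂ) :=
    ⟨Nat.cast_ne_zero.mpr Monoid.exponent_ne_zero_of_finite⟩
  have hcard := DirichletCharacter.card_eq_totient_of_hasEnoughRootsOfUnity ℂ n
  classical
  let T : {d // d ∈ n.divisors} → Type := fun d => {ψ : DirichletCharacter ℂ d.1 // ψ.IsPrimitive}
  let f : (Σ d : {d // d ∈ n.divisors}, T d) → DirichletCharacter ℂ n :=
    fun x => changeLevel (Nat.dvd_of_mem_divisors x.1.2) x.2.1
  have hbij : Function.Bijective f := by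
    constructor
    · rintro ⟨⟨d₁, hd₁⟩, ⟨ψ₁, hp₁⟩⟩ ⟨⟨d₂, hd₂⟩, ⟨ψ₂, hp₂⟩⟩ h
      simp only [f] at h
      have hd : d₁ = d₂ := by
        have e1 : conductor (changeLevel (Nat.dvd_of_mem_divisors hd₁) ψ₁) = d₁ := by
          rw [conductor_changeLevel_aux]; exact hp₁
        have e2 : conductor (changeLevel (Nat.dvd_of_mem_divisors hd₂) ψ₂) = d₂ := by
          rw [conductor_changeLevel_aux]; exact hp₂
        rw [← e1, h, e2]
      subst hd
      have : ψ₁ = ψ₂ := changeLevel_injective (Nat.dvd_of_mem_divisors hd₁) h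
      subst this
      rfl
    · intro χ
      refine ⟨⟨⟨χ.conductor, Nat.mem_divisors.mpr ⟨χ.conductor_dvd_level, hn⟩⟩,
        ⟨χ.primitiveCharacter, χ.primitiveCharacter_isPrimitive⟩⟩, ?_⟩
      exact changeLevel_primitiveCharacter_aux χ
  have h1 : Nat.card (DirichletCharacter ℂ n) = Nat.card (Σ d : {d // d ∈ n.divisors}, T d) :=
    (Nat.card_congr (Equiv.ofBijective f hbij)).symm
  letI : ∀ d : {d // d ∈ n.divisors}, Fintype (T d) := fun d => Fintype.ofFinite _
  have h2 : Nat.card (Σ d : {d // d ∈ n.divisors}, T d)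
      = ∑ d ∈ n.divisors.attach, Nat.card (T d) := by
    rw [Nat.card_eq_fintype_card, Fintype.card_sigma]
    apply Finset.sum_congr rfl
    intro d _
    rw [Nat.card_eq_fintype_card]
  have h3 : ∑ d ∈ n.divisors.attach, Nat.card (T d) = ∑ d ∈ n.divisors, numPrim d := by
    rw [← Finset.sum_attach n.divisors (fun d => numPrim d)]
    rfl
  rw [← hcard, h1, h2, h3]

/-! ### Möbius inversion: `numPrim` as a multiplicative function -/

open ArithmeticFunction in
/-- The totient as an integer-valued arithmetic function. -/
noncomputable def PhiZ : ArithmeticFunction ℤ := ⟨fun n => (n.totient : ℤ), by simp⟩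

@[simp] lemma PhiZ_apply (n : ℕ) : PhiZ n = (n.totient : ℤ) := rfl

lemma PhiZ_mult : PhiZ.IsMultiplicative := by
  constructor
  · simp
  · intro m n h
    simp [Nat.totient_mul h]

open ArithmeticFunction in
/-- The number of primitive characters as an arithmetic function, via `μ * φ`. -/
noncomputable def Pfun : ArithmeticFunction ℤ := ArithmeticFunction.moebius * PhiZ

open ArithmeticFunction in
lemma Pfun_mult : Pfun.IsMultiplicative := isMultiplicative_moebius.mul PhiZ_mult

open ArithmeticFunction in
lemma numPrim_eq_Pfun {n : ℕ} (hn : 0 < n) : (numPrim n : ℤ) = Pfun n := by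
  have key := (sum_eq_iff_sum_smul_moebius_eq (R := ℤ)
    (f := fun d => (numPrim d : ℤ)) (g := fun d => (d.totient : ℤ))).mp ?_ n hn
  · rw [← key, Pfun, mul_apply]
    apply Finset.sum_congr rfl
    intro x _
    rw [smul_eq_mul]
    rfl
  · intro m hm
    have := totient_eq_sum_numPrim hm.ne'
    exact_mod_cast (congrArg (fun x : ℕ => (x : ℤ)) this).symm

open ArithmeticFunction in
lemma Pfun_prime_pow {p : ℕ} (hp : p.Prime) {a : ℕ} (ha : a ≠ 0) :
    Pfun (p ^ a) = (Nat.totient (p ^ a) : ℤ) - (Nat.totient (p ^ (a - 1)) : ℤ) := by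
  rw [Pfun, mul_apply]
  rw [Nat.sum_divisorsAntidiagonal (f := fun d e => (moebius d : ℤ) * PhiZ e)]
  rw [Nat.sum_divisors_prime_pow hp]
  obtain ⟨b, rfl⟩ : ∃ b, a = b + 1 :=
    ⟨a - 1, (Nat.succ_pred_eq_of_pos (Nat.pos_of_ne_zero ha)).symm⟩
  rw [Finset.range_eq_Ico, Finset.sum_eq_sum_Ico_succ_bot (by omega),
    Finset.sum_eq_sum_Ico_succ_bot (by omega)]
  have htail : ∑ i ∈ Finset.Ico 2 (b + 1 + 1),
      (moebius (p ^ i) : ℤ) * PhiZ (p ^ (b + 1) / p ^ i) = 0 := by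
    apply Finset.sum_eq_zero
    intro i hi
    rw [Finset.mem_Ico] at hi
    rw [moebius_apply_prime_pow hp (by omega : i ≠ 0), if_neg (by omega)]
    simp
  rw [htail]
  have hmu : (moebius p : ℤ) = -1 := by
    have := moebius_apply_prime_pow hp one_ne_zero (p := p)
    rwa [pow_one, if_pos rfl] at this
  have h2 : p ^ (b + 1) / p ^ (0 + 1) = p ^ b := by
    rw [Nat.pow_div (by omega) hp.pos]
    norm_num
  rw [h2]
  norm_num [hmu]
  ring

/-! ### The local factors of `rho` -/

/-- The local factor of `rho` at a prime power. -/
noncomputable def ratio (p a : ℕ) : ℝ := ((Pfun (p ^ a) : ℤ) : ℝ) / (((p ^ a).totient : ℕ) : ℝ)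

/-- The function `q ↦ (q-2)/(q-1)`. -/
noncomputable def gg (q : ℕ) : ℝ := ((q : ℝ) - 2) / ((q : ℝ) - 1)

lemma rho_eq_prod {n : ℕ} (hn : n ≠ 0) :
    rho n = ∏ p ∈ n.primeFactors, ratio p (n.factorization p) := by
  have hP : ((numPrim n : ℤ) : ℝ)
      = ∏ p ∈ n.primeFactors, ((Pfun (p ^ n.factorization p) : ℤ) : ℝ) := by
    rw [numPrim_eq_Pfun (Nat.pos_of_ne_zero hn),
      Pfun_mult.multiplicative_factorization Pfun hn, Finsupp.prod,
      Nat.support_factorization]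
    push_cast
    rfl
  have hT : ((n.totient : ℤ) : ℝ)
      = ∏ p ∈ n.primeFactors, (((p ^ n.factorization p).totient : ℕ) : ℝ) := by
    have := PhiZ_mult.multiplicative_factorization PhiZ hn
    rw [PhiZ_apply, Finsupp.prod, Nat.support_factorization] at this
    rw [this]
    push_cast
    rfl
  rw [rho]
  push_cast at hP hT ⊢
  rw [hP, hT, ← Finset.prod_div_distrib]
  rfl

lemma ratio_one {p : ℕ} (hp : p.Prime) : ratio p 1 = gg p := by
  rw [ratio, Pfun_prime_pow hp one_ne_zero, gg]
  simp only [pow_one, pow_zero, Nat.totient_one, Nat.totient_prime hp]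
  push_cast [Nat.cast_sub hp.one_lt.le]
  norm_num
  ring_nf

lemma ratio_ge_two {p : ℕ} (hp : p.Prime) {a : ℕ} (ha : 2 ≤ a) :
    ratio p a = ((p : ℝ) - 1) / p := by
  rw [ratio, Pfun_prime_pow hp (by omega)]
  rw [Nat.totient_prime_pow hp (by omega : 0 < a), Nat.totient_prime_pow hp (by omega : 0 < a - 1)]
  have hp1 : (1:ℝ) ≤ (p:ℝ) := by exact_mod_cast hp.one_lt.le
  have hppos : (0:ℝ) < (p:ℝ) := by positivity
  push_cast [Nat.cast_sub hp.one_lt.le]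
  have hae : a - 1 - 1 = a - 2 := by omega
  rw [hae]
  have h1 : (p:ℝ) ^ (a-1) = (p:ℝ)^(a-2) * p := by
    rw [← pow_succ]; congr 1; omega
  rw [h1]
  have hpow : (0:ℝ) < (p:ℝ)^(a-2) := by positivity
  have hp1' : (0:ℝ) < (p:ℝ) - 1 := by
    have : (1:ℝ) < (p:ℝ) := by exact_mod_cast hp.one_lt
    linarith
  rw [div_eq_div_iff (by positivity) (by positivity)]
  ring

/-! ### Elementary facts about `gg` and the primes -/

lemma gg_nonneg {q : ℕ} (hq : 2 ≤ q) : 0 ≤ gg q := by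
  have h2 : (2:ℝ) ≤ (q:ℝ) := by exact_mod_cast hq
  apply div_nonneg <;> linarith

lemma gg_mono {a b : ℕ} (ha : 3 ≤ a) (hab : a ≤ b) : gg a ≤ gg b := by
  have ha' : (3:ℝ) ≤ (a:ℝ) := by exact_mod_cast ha
  have hab' : (a:ℝ) ≤ (b:ℝ) := by exact_mod_cast hab
  rw [gg, gg, div_le_div_iff₀ (by linarith) (by linarith)]
  nlinarith

lemma gg_half_le {q : ℕ} (hq : 3 ≤ q) : (2:ℝ)⁻¹ ≤ gg q := by
  have hq' : (3:ℝ) ≤ (q:ℝ) := by exact_mod_cast hq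
  rw [gg, le_div_iff₀ (by linarith)]
  linarith

lemma nth_prime_prime (i : ℕ) : (Nat.nth Nat.Prime i).Prime :=
  Nat.nth_mem_of_infinite Nat.infinite_setOf_prime i

lemma nth_prime_injective : Function.Injective (Nat.nth Nat.Prime) :=
  Nat.nth_injective Nat.infinite_setOf_prime

lemma nth_prime_ge_three {i : ℕ} (hi : 1 ≤ i) : 3 ≤ Nat.nth Nat.Prime i := by
  have := (Nat.nth_le_nth Nat.infinite_setOf_prime).mpr hi
  rwa [Nat.nth_prime_one_eq_three] at this

lemma prod_gg_ge_aux (m : ℕ) : ∀ S : Finset ℕ, (∀ q ∈ S, q.Prime ∧ q ≠ 2) → S.card = m →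
    ∏ i ∈ Finset.Ico 1 (m + 1), gg (Nat.nth Nat.Prime i) ≤ ∏ q ∈ S, gg q := by
  induction m with
  | zero =>
    intro S hS hm
    rw [Finset.card_eq_zero] at hm
    subst hm
    simp
  | succ m ih =>
    intro S hS hm
    have hne : S.Nonempty := by
      rw [← Finset.card_pos, hm]; omega
    set q := S.max' hne with hq_def
    have hqS : q ∈ S := S.max'_mem hne
    have hq3 : 3 ≤ q := by
      rcases hS q hqS with ⟨hp, h2⟩
      rcases hp.two_le.lt_or_eq with h | h
      · omega
      · omega
    have h2S : (2:ℕ) ∉ S := fun h => (hS 2 h).2 rfl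
    have hnth : Nat.nth Nat.Prime (m + 1) ≤ q := by
      have hsub : insert 2 S ⊆ Finset.filter Nat.Prime (Finset.range (q + 1)) := by
        intro x hx
        rcases Finset.mem_insert.mp hx with rfl | hx
        · exact Finset.mem_filter.mpr ⟨Finset.mem_range.mpr (by omega), Nat.prime_two⟩
        · exact Finset.mem_filter.mpr ⟨Finset.mem_range.mpr
            (Nat.lt_succ_of_le (S.le_max' x hx)), (hS x hx).1⟩
      have hcount : m + 2 ≤ Nat.count Nat.Prime (q + 1) := by
        rw [Nat.count_eq_card_filter_range]
        calc m + 2 = (insert 2 S).card := by rw [Finset.card_insert_of_notMem h2S, hm]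
        _ ≤ _ := Finset.card_le_card hsub
      have := Nat.nth_lt_of_lt_count (p := Nat.Prime)
        (show m + 1 < Nat.count Nat.Prime (q+1) by omega)
      omega
    have hnth3 : 3 ≤ Nat.nth Nat.Prime (m + 1) := nth_prime_ge_three (by omega)
    set S' := S.erase q with hS'_def
    have hcard' : S'.card = m := by
      rw [hS'_def, Finset.card_erase_of_mem hqS, hm]
      omega
    have hIH := ih S' (fun x hx => hS x (Finset.mem_of_mem_erase hx)) hcard'
    calc ∏ i ∈ Finset.Ico 1 (m + 1 + 1), gg (Nat.nth Nat.Prime i)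
        = (∏ i ∈ Finset.Ico 1 (m + 1), gg (Nat.nth Nat.Prime i))
            * gg (Nat.nth Nat.Prime (m+1)) := by
          rw [Finset.prod_Ico_succ_top (by omega)]
      _ ≤ (∏ x ∈ S', gg x) * gg q := by
          apply mul_le_mul hIH (gg_mono hnth3 hnth) (gg_nonneg (by omega))
          exact Finset.prod_nonneg fun x hx =>
            gg_nonneg (hS x (Finset.mem_of_mem_erase hx)).1.two_le
      _ = ∏ x ∈ S, gg x := by
          rw [hS'_def, mul_comm, Finset.mul_prod_erase S gg hqS]

lemma prod_gg_ge (S : Finset ℕ) (hS : ∀ q ∈ S, q.Prime ∧ q ≠ 2) :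
    ∏ i ∈ Finset.Ico 1 (S.card + 1), gg (Nat.nth Nat.Prime i) ≤ ∏ q ∈ S, gg q :=
  prod_gg_ge_aux S.card S hS rfl

/-! ### Evaluation of `rho` at `2 * nthPrimorial k` -/

lemma nthPrimorial_ne_zero (k : ℕ) : nthPrimorial k ≠ 0 :=
  Finset.prod_ne_zero_iff.mpr fun i _ => (nth_prime_prime i).pos.ne'

lemma nthPrimorial_eq_prod (k : ℕ) :
    nthPrimorial k = ∏ p ∈ (Finset.range k).image (Nat.nth Nat.Prime), p := by
  rw [Finset.prod_image (fun a _ b _ h => nth_prime_injective h)]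
  rfl

lemma primeFactors_nthPrimorial (k : ℕ) :
    (nthPrimorial k).primeFactors = (Finset.range k).image (Nat.nth Nat.Prime) := by
  rw [nthPrimorial_eq_prod, Nat.primeFactors_prod]
  intro p hp
  obtain ⟨i, _, rfl⟩ := Finset.mem_image.mp hp
  exact nth_prime_prime i

lemma factorization_nthPrimorial_apply {k j : ℕ} (hj : j < k) :
    (nthPrimorial k).factorization (Nat.nth Nat.Prime j) = 1 := by
  rw [nthPrimorial, Nat.factorization_prod (fun i _ => (nth_prime_prime i).pos.ne')]
  rw [Finsupp.finset_sum_apply]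
  have : ∀ i ∈ Finset.range k,
      (Nat.nth Nat.Prime i).factorization (Nat.nth Nat.Prime j)
        = if i = j then 1 else 0 := by
    intro i _
    rw [(nth_prime_prime i).factorization, Finsupp.single_apply]
    congr 1
    simp only [eq_iff_iff]
    exact ⟨fun h => nth_prime_injective h, fun h => h ▸ rfl⟩
  rw [Finset.sum_congr rfl this, Finset.sum_ite_eq' (Finset.range k) j (fun _ => 1),
    if_pos (Finset.mem_range.mpr hj)]

lemma primeFactors_twoPrimorial {k : ℕ} (hk : 1 ≤ k) :
    (2 * nthPrimorial k).primeFactors = (Finset.range k).image (Nat.nth Nat.Prime) := by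
  rw [Nat.primeFactors_mul two_ne_zero (nthPrimorial_ne_zero k), primeFactors_nthPrimorial,
    Nat.Prime.primeFactors Nat.prime_two]
  apply Finset.union_eq_right.mpr
  intro x hx
  rcases Finset.mem_singleton.mp hx with rfl
  exact Finset.mem_image.mpr ⟨0, Finset.mem_range.mpr (by omega), Nat.nth_prime_zero_eq_two⟩

lemma factorization_twoPrimorial {k j : ℕ} (hj : j < k) :
    (2 * nthPrimorial k).factorization (Nat.nth Nat.Prime j) = if j = 0 then 2 else 1 := by
  rw [Nat.factorization_mul two_ne_zero (nthPrimorial_ne_zero k)]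
  rw [Finsupp.add_apply, factorization_nthPrimorial_apply hj, Nat.prime_two.factorization,
    Finsupp.single_apply]
  rcases eq_or_ne j 0 with rfl | hj0
  · rw [Nat.nth_prime_zero_eq_two, if_pos rfl, if_pos rfl]
  · rw [if_neg, if_neg hj0]
    intro h
    exact hj0 (nth_prime_injective (Nat.nth_prime_zero_eq_two.trans h)).symm

lemma rho_twoPrimorial {k : ℕ} (hk : 1 ≤ k) :
    rho (2 * nthPrimorial k) = 2⁻¹ * ∏ i ∈ Finset.Ico 1 k, gg (Nat.nth Nat.Prime i) := by
  rw [rho_eq_prod (Nat.mul_ne_zero two_ne_zero (nthPrimorial_ne_zero k)),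
    primeFactors_twoPrimorial hk,
    Finset.prod_image (fun a _ b _ h => nth_prime_injective h)]
  have hcongr : ∀ i ∈ Finset.range k,
      ratio (Nat.nth Nat.Prime i) ((2 * nthPrimorial k).factorization (Nat.nth Nat.Prime i))
        = if i = 0 then (2:ℝ)⁻¹ else gg (Nat.nth Nat.Prime i) := by
    intro i hi
    rw [factorization_twoPrimorial (Finset.mem_range.mp hi)]
    rcases eq_or_ne i 0 with rfl | hi0
    · rw [if_pos rfl, if_pos rfl, Nat.nth_prime_zero_eq_two, ratio_ge_two Nat.prime_two le_rfl]
      norm_num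
    · rw [if_neg hi0, if_neg hi0, ratio_one (nth_prime_prime i)]
  rw [Finset.prod_congr rfl hcongr]
  rw [Finset.range_eq_Ico, Finset.prod_eq_prod_Ico_succ_bot (by omega : 0 < k)]
  rw [if_pos rfl]
  congr 1
  apply Finset.prod_congr rfl
  intro i hi
  rw [if_neg]
  rw [Finset.mem_Ico] at hi
  omega

/-! ### The lower bound for `rho n` -/

lemma ratio_nonneg {p : ℕ} (hp : p.Prime) {a : ℕ} (ha : a ≠ 0) : 0 ≤ ratio p a := by
  have hp2 : (2:ℝ) ≤ (p:ℝ) := by exact_mod_cast hp.two_le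
  rcases eq_or_lt_of_le (Nat.one_le_iff_ne_zero.mpr ha) with h | h
  · rw [← h, ratio_one hp]
    exact gg_nonneg hp.two_le
  · rw [ratio_ge_two hp h]
    apply div_nonneg <;> linarith

lemma ratio_ge_gg {p : ℕ} (hp : p.Prime) (hp2 : p ≠ 2) {a : ℕ} (ha : a ≠ 0) :
    gg p ≤ ratio p a := by
  have hp3 : 3 ≤ p := by
    rcases hp.two_le.lt_or_eq with h | h
    · omega
    · omega
  have hp3' : (3:ℝ) ≤ (p:ℝ) := by exact_mod_cast hp3
  rcases eq_or_lt_of_le (Nat.one_le_iff_ne_zero.mpr ha) with h | h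
  · rw [← h, ratio_one hp]
  · rw [ratio_ge_two hp h, gg, div_le_div_iff₀ (by linarith) (by linarith)]
    nlinarith

lemma rho_lower {n k : ℕ} (hn : n ≠ 0) (hn4 : n % 4 ≠ 2)
    (hcard : n.primeFactors.card = k) (hk : 1 ≤ k) :
    2⁻¹ * ∏ i ∈ Finset.Ico 1 k, gg (Nat.nth Nat.Prime i) ≤ rho n := by
  rw [rho_eq_prod hn]
  have hprime : ∀ p ∈ n.primeFactors, p.Prime := fun p hp => Nat.prime_of_mem_primeFactors hp
  have hfpos : ∀ p ∈ n.primeFactors, n.factorization p ≠ 0 := fun p hp =>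
    (Nat.Prime.factorization_pos_of_dvd (hprime p hp) hn (Nat.dvd_of_mem_primeFactors hp)).ne'
  by_cases h2 : 2 ∈ n.primeFactors
  · have h2dvd : 2 ∣ n := Nat.dvd_of_mem_primeFactors h2
    have h4 : (4:ℕ) ∣ n := by omega
    have ha2 : 2 ≤ n.factorization 2 := by
      rw [← Nat.Prime.pow_dvd_iff_le_factorization Nat.prime_two hn]
      exact_mod_cast (show (2:ℕ)^2 ∣ n by norm_num; exact h4)
    rw [← Finset.mul_prod_erase _ _ h2, ratio_ge_two Nat.prime_two ha2]
    have h12 : ((2:ℕ):ℝ) - 1 = 1 := by norm_num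
    rw [h12]
    have hSodd : ∀ q ∈ n.primeFactors.erase 2, q.Prime ∧ q ≠ 2 := fun q hq =>
      ⟨hprime q (Finset.mem_of_mem_erase hq), Finset.ne_of_mem_erase hq⟩
    have hstep : ∏ i ∈ Finset.Ico 1 k, gg (Nat.nth Nat.Prime i)
        ≤ ∏ p ∈ n.primeFactors.erase 2, ratio p (n.factorization p) := by
      have hc : (n.primeFactors.erase 2).card + 1 = k := by
        rw [Finset.card_erase_of_mem h2, hcard]
        omega
      calc ∏ i ∈ Finset.Ico 1 k, gg (Nat.nth Nat.Prime i)
          = ∏ i ∈ Finset.Ico 1 ((n.primeFactors.erase 2).card + 1),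
              gg (Nat.nth Nat.Prime i) := by rw [hc]
        _ ≤ ∏ p ∈ n.primeFactors.erase 2, gg p := prod_gg_ge _ hSodd
        _ ≤ ∏ p ∈ n.primeFactors.erase 2, ratio p (n.factorization p) := by
            apply Finset.prod_le_prod
            · intro p hp; exact gg_nonneg (hSodd p hp).1.two_le
            · intro p hp
              exact ratio_ge_gg (hSodd p hp).1 (hSodd p hp).2
                (hfpos p (Finset.mem_of_mem_erase hp))
    calc 2⁻¹ * ∏ i ∈ Finset.Ico 1 k, gg (Nat.nth Nat.Prime i)
        ≤ 2⁻¹ * ∏ p ∈ n.primeFactors.erase 2, ratio p (n.factorization p) := by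
          apply mul_le_mul_of_nonneg_left hstep (by norm_num)
      _ = 1 / ((2:ℕ):ℝ) * ∏ p ∈ n.primeFactors.erase 2, ratio p (n.factorization p) := by
          norm_num
  · have hSodd : ∀ q ∈ n.primeFactors, q.Prime ∧ q ≠ 2 := fun q hq =>
      ⟨hprime q hq, fun h => h2 (h ▸ hq)⟩
    have hprodnn : (0:ℝ) ≤ ∏ i ∈ Finset.Ico 1 k, gg (Nat.nth Nat.Prime i) :=
      Finset.prod_nonneg fun i _ => gg_nonneg (nth_prime_prime i).two_le
    calc 2⁻¹ * ∏ i ∈ Finset.Ico 1 k, gg (Nat.nth Nat.Prime i)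
        ≤ gg (Nat.nth Nat.Prime k) * ∏ i ∈ Finset.Ico 1 k, gg (Nat.nth Nat.Prime i) :=
          mul_le_mul_of_nonneg_right (gg_half_le (nth_prime_ge_three hk)) hprodnn
      _ = ∏ i ∈ Finset.Ico 1 (k + 1), gg (Nat.nth Nat.Prime i) := by
          rw [Finset.prod_Ico_succ_top (by omega : 1 ≤ k)]
          ring
      _ ≤ ∏ p ∈ n.primeFactors, gg p := by
          have := prod_gg_ge n.primeFactors hSodd
          rwa [hcard] at this
      _ ≤ ∏ p ∈ n.primeFactors, ratio p (n.factorization p) := by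
          apply Finset.prod_le_prod
          · intro p hp; exact gg_nonneg (hprime p hp).two_le
          · intro p hp; exact ratio_ge_gg (hprime p hp) (hSodd p hp).2 (hfpos p hp)

lemma rho_nonneg (n : ℕ) : 0 ≤ rho n := by
  rw [rho]
  positivity

lemma six_le_nthPrimorial {k : ℕ} (hk : 1 < k) : 6 ≤ nthPrimorial k := by
  have h2 : nthPrimorial 2 = 6 := by
    simp [nthPrimorial, Finset.prod_range_succ, Nat.nth_prime_zero_eq_two,
      Nat.nth_prime_one_eq_three]
  calc (6:ℕ) = nthPrimorial 2 := h2.symm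
    _ ≤ nthPrimorial k := by
        apply Finset.prod_le_prod_of_subset_of_one_le'
        · exact Finset.range_subset_range.mpr hk
        · intro i _ _
          exact (nth_prime_prime i).one_lt.le

theorem rho_loglog_ineq (k : ℕ) (hk : 1 < k) (n : ℕ)
    (hge : 2 * nthPrimorial k ≤ n) (hn4 : n % 4 ≠ 2)
    (homega : n.primeFactors.card = k) :
    rho (2 * nthPrimorial k) * Real.log (Real.log (2 * nthPrimorial k)) ≤
      rho n * Real.log (Real.log n) := by
  have h12 : (12:ℕ) ≤ 2 * nthPrimorial k := by
    have := six_le_nthPrimorial hk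
    omega
  have hn0 : n ≠ 0 := by omega
  have hrho : rho (2 * nthPrimorial k) ≤ rho n := by
    rw [rho_twoPrimorial (by omega : 1 ≤ k)]
    exact rho_lower hn0 hn4 homega (by omega)
  have h12' : (12:ℝ) ≤ ((2 * nthPrimorial k : ℕ) : ℝ) := by exact_mod_cast h12
  have hmn : ((2 * nthPrimorial k : ℕ) : ℝ) ≤ (n : ℝ) := by exact_mod_cast hge
  have hlogM : 1 ≤ Real.log ((2 * nthPrimorial k : ℕ) : ℝ) := by
    rw [Real.le_log_iff_exp_le (by linarith)]
    have := Real.exp_one_lt_d9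
    linarith
  have hloglog : Real.log (Real.log ((2 * nthPrimorial k : ℕ) : ℝ)) ≤
      Real.log (Real.log (n : ℝ)) := by
    apply Real.log_le_log (by linarith)
    apply Real.log_le_log (by linarith) hmn
  have h0 : 0 ≤ Real.log (Real.log ((2 * nthPrimorial k : ℕ) : ℝ)) :=
    Real.log_nonneg hlogM
  have := mul_le_mul hrho hloglog h0 (rho_nonneg n)
  exact_mod_cast this
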